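/- In a generalised voting game, suppose x_min is an O-minimal action and x_max is an O-maximal action for player i, singletons of X i are measurable, and (μ i) {x_min} ≠ 0. Then the conditional probability of player i being criticality-0 increasingly critical, given that player i plays x_min, satisfies Pr(O_IC_i^0 | {ω | ω i = x_min}) = Pr(O | x_max) − Pr(O | x_min), where the conditional probability is P(O_IC_i^0 ∩ {ω | ω i = x_min}) / P({ω | ω i = x_min}). -/
import Mathlib


open MeasureTheory Function

theorem stmt_7
    {ι : Type*} [Fintype ι] [Nonempty ι] [DecidableEq ι]
    {X : ι → Type*} [∀ j, MeasurableSpace (X j)]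
    (μ : ∀ j, Measure (X j)) [∀ j, IsProbabilityMeasure (μ j)]
    {𝒪 : Type*} [MeasurableSpace 𝒪] [MeasurableSingletonClass 𝒪]
    (W : (∀ j, X j) → 𝒪) (hW : Measurable W)
    (O : 𝒪) (i : ι)
    (x_min : X i)
    (hmin : ∀ ω : ∀ j, X j, W (update ω i x_min) = O →
      ∀ x : X i, W (update ω i x) = O)
    (x_max : X i)
    (hmax : ∀ ω : ∀ j, X j, ∀ x : X i, W (update ω i x) = O →
      W (update ω i x_max) = O)
    [MeasurableSingletonClass (X i)]
    (hne : μ i {x_min} ≠ 0)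
    :
    Measure.pi μ ({ω | ω i = x_min ∧ W ω ≠ O ∧ W (update ω i x_max) = O} ∩ {ω | ω i = x_min}) /
        Measure.pi μ {ω | ω i = x_min} =
      Measure.pi μ {ω | W (update ω i x_max) = O} - Measure.pi μ {ω | W (update ω i x_min) = O} := by
  classical
  set p : ι → Prop := fun j => j = i with hp
  have : DecidablePred p := fun j => inferInstanceAs (Decidable (j = i))
  letI iF1 : Fintype (Subtype p) := Subtype.fintype p
  letI iF2 : Fintype {j // ¬ p j} := Subtype.fintype _
  set e := MeasurableEquiv.piEquivPiSubtypeProd X p with he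
  set ν₁ : Measure (∀ j : Subtype p, X j) := Measure.pi (fun j : Subtype p => μ j) with hν₁
  set ν₂ : Measure (∀ j : {j // ¬ p j}, X j) := Measure.pi (fun j : {j // ¬ p j} => μ j) with hν₂
  have hmp : MeasurePreserving e (Measure.pi μ) (ν₁.prod ν₂) := by
    rw [he, hν₁, hν₂]; exact measurePreserving_piEquivPiSubtypeProd μ p
  -- fixed first component
  set f0 : ∀ j : Subtype p, X j := fun j => (show (i:ι) = j.1 from j.2.symm) ▸ x_min with hf0
  -- key pointwise lemma
  have key : ∀ (ω : ∀ j, X j) (x : X i),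
      update (e.symm (f0, (e ω).2)) i x = update ω i x := by
    intro ω x
    funext j
    by_cases hj : j = i
    · subst hj; simp
    · rw [update_of_ne hj, update_of_ne hj]
      calc e.symm (f0, (e ω).2) j
          = if h : p j then f0 ⟨j, h⟩ else (e ω).2 ⟨j, h⟩ := rfl
        _ = (e ω).2 ⟨j, hj⟩ := by rw [dif_neg hj]
        _ = ω j := rfl
  -- sets on second factor
  set T : X i → Set (∀ j : {j // ¬ p j}, X j) :=
    fun x => {g | W (update (e.symm (f0, g)) i x) = O} with hT
  have hTmeas : ∀ x, MeasurableSet (T x) := by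
    intro x
    have : Measurable fun g : ∀ j : {j // ¬ p j}, X j =>
        W (update (e.symm (f0, g)) i x) := by
      exact hW.comp (measurable_update_left.comp
        (e.symm.measurable.comp (measurable_prodMk_left)))
    exact this (measurableSet_singleton O)
  have hSpre : ∀ x, {ω | W (update ω i x) = O} = e ⁻¹' (Set.univ ×ˢ T x) := by
    intro x
    ext ω
    simp only [Set.mem_preimage, Set.mem_prod, Set.mem_univ, true_and, hT,
      Set.mem_setOf_eq, key ω x]
  -- the first-coordinate set
  set F : Set (∀ j : Subtype p, X j) := {f | f ⟨i, rfl⟩ = x_min} with hF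
  have hFpre : {ω : ∀ j, X j | ω i = x_min} = e ⁻¹' (F ×ˢ Set.univ) := by
    ext ω
    simp only [Set.mem_preimage, Set.mem_prod, Set.mem_univ, and_true, hF,
      Set.mem_setOf_eq, he, MeasurableEquiv.piEquivPiSubtypeProd, MeasurableEquiv.coe_mk,
      Equiv.piEquivPiSubtypeProd, Equiv.coe_fn_mk]
  -- measure of F
  letI : Unique (Subtype p) := Unique.subtypeEq i
  have hFmeas : MeasurableSet F := by
    have : Measurable fun f : ∀ j : Subtype p, X j => f (⟨i, rfl⟩ : Subtype p) :=
      measurable_pi_apply _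
    exact this (measurableSet_singleton x_min)
  have hFval : ν₁ F = μ i {x_min} := by
    have hFeq : F = Set.univ.pi
        (fun j : Subtype p => (show (i:ι) = j.1 from j.2.symm) ▸ ({x_min} : Set (X i))) := by
      ext f
      simp only [Set.mem_univ_pi, hF, Set.mem_setOf_eq]
      constructor
      · intro h j
        have hj : j = ⟨i, rfl⟩ := Subsingleton.elim _ _
        subst hj; exact h
      · intro h; exact h ⟨i, rfl⟩
    rw [hFeq, hν₁, Measure.pi_pi, Fintype.prod_unique]
    rfl
  -- subset relation
  have hsub : T x_min ⊆ T x_max := by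
    intro g hg
    exact hmax _ _ (hmin _ hg x_max)
  -- rewrite everything
  have hset : ({ω | ω i = x_min ∧ W ω ≠ O ∧ W (update ω i x_max) = O} ∩ {ω | ω i = x_min})
      = e ⁻¹' (F ×ˢ (T x_max \ T x_min)) := by
    ext ω
    have hωupd : update ω i x_min = ω → W (update ω i x_min) = W ω := fun h => by rw [h]
    simp only [Set.mem_inter_iff, Set.mem_setOf_eq, Set.mem_preimage, Set.mem_prod,
      Set.mem_diff]
    constructor
    · rintro ⟨⟨h1, h2, h3⟩, -⟩
      refine ⟨?_, ?_, ?_⟩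
      · rw [← hFpre] at *; exact h1
      · show (e ω).2 ∈ T x_max
        simp only [hT, Set.mem_setOf_eq, key ω x_max]; exact h3
      · show (e ω).2 ∉ T x_min
        simp only [hT, Set.mem_setOf_eq, key ω x_min]
        intro hcon
        apply h2
        rwa [show update ω i x_min = ω by rw [← h1]; exact update_eq_self i ω] at hcon
    · rintro ⟨h1, h2, h3⟩
      have hωi : ω i = x_min := by
        have := hFpre ▸ (Set.mem_preimage.mpr (show e ω ∈ F ×ˢ (Set.univ) from ⟨h1, trivial⟩))
        exact this
      simp only [hT, Set.mem_setOf_eq, key ω x_max] at h2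
      simp only [hT, Set.mem_setOf_eq, key ω x_min] at h3
      refine ⟨⟨hωi, ?_, h2⟩, hωi⟩
      intro hcon
      apply h3
      rwa [show update ω i x_min = ω by rw [← hωi]; exact update_eq_self i ω]
  -- compute measures
  have hP1 : Measure.pi μ ({ω | ω i = x_min ∧ W ω ≠ O ∧ W (update ω i x_max) = O}
      ∩ {ω | ω i = x_min}) = μ i {x_min} * ν₂ (T x_max \ T x_min) := by
    rw [hset, hmp.measure_preimage
      ((hFmeas.prod ((hTmeas x_max).diff (hTmeas x_min)))).nullMeasurableSet,
      Measure.prod_prod, hFval]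
  have hP2 : Measure.pi μ {ω : ∀ j, X j | ω i = x_min} = μ i {x_min} := by
    rw [hFpre, hmp.measure_preimage (hFmeas.prod MeasurableSet.univ).nullMeasurableSet,
      Measure.prod_prod, hFval, measure_univ, mul_one]
  have hPS : ∀ x, Measure.pi μ {ω | W (update ω i x) = O} = ν₂ (T x) := by
    intro x
    rw [hSpre x, hmp.measure_preimage (MeasurableSet.univ.prod (hTmeas x)).nullMeasurableSet,
      Measure.prod_prod, measure_univ, one_mul]
  rw [hP1, hP2, hPS, hPS]
  rw [measure_diff hsub (hTmeas x_min).nullMeasurableSet (measure_ne_top _ _)]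
  rw [mul_comm, mul_div_assoc, ENNReal.div_self hne (measure_ne_top _ _), mul_one]
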